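/- For any matrix X ∈ ℝ^{n×m}, the nuclear norm equals the minimum of (1/2)·Tr(Z) over all positive semidefinite matrices Z ∈ ℝ^{(n+m)×(n+m)} whose upper-right n×m block equals X. -/

import Mathlib

open Matrix

lemma real_conjT {k l : ℕ} (M : Matrix (Fin k) (Fin l) ℝ) : Mᴴ = Mᵀ := by
  ext i j; simp [conjTranspose]

lemma tr_nonneg {N : Type*} [Fintype N] [DecidableEq N] {M : Matrix N N ℝ}
    (hM : M.PosSemidef) : 0 ≤ M.trace := by
  rw [Matrix.trace]
  refine Finset.sum_nonneg fun i _ => ?_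
  exact hM.diag_nonneg

lemma tr_blocks {k l : ℕ} (M : Matrix (Fin k ⊕ Fin l) (Fin k ⊕ Fin l) ℝ) :
    M.trace = M.toBlocks₁₁.trace + M.toBlocks₂₂.trace := by
  simp [Matrix.trace, Fintype.sum_sum_type, toBlocks₁₁, toBlocks₂₂, diag]

lemma tr_mul_nonneg {k : ℕ} {A P : Matrix (Fin k) (Fin k) ℝ}
    (hA : A.PosSemidef) (hP : P.PosSemidef) : 0 ≤ (A * P).trace := by
  obtain ⟨C, hC⟩ : ∃ C : Matrix (Fin k) (Fin k) ℝ, A = Cᴴ * C := by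
    open scoped MatrixOrder in
    obtain ⟨B, hB⟩ := CStarAlgebra.nonneg_iff_eq_star_mul_self.mp hA.nonneg
    exact ⟨B, hB⟩
  rw [hC, Matrix.mul_assoc, Matrix.trace_mul_comm]
  exact tr_nonneg (hP.mul_mul_conjTranspose_same C)

noncomputable def nuclearNorm {n m : ℕ} (X : Matrix (Fin n) (Fin m) ℝ) : ℝ :=
  ∑ i, Real.sqrt ((Matrix.isHermitian_conjTranspose_mul_self X).eigenvalues i)

noncomputable def frob {n m : ℕ} (X : Matrix (Fin n) (Fin m) ℝ) : ℝ :=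
  Real.sqrt (∑ i, ∑ j, (X i j)^2)

theorem stmt_3 {n m : ℕ} (X : Matrix (Fin n) (Fin m) ℝ) :
    IsLeast {c : ℝ | ∃ Z : Matrix (Fin n ⊕ Fin m) (Fin n ⊕ Fin m) ℝ,
        Z.PosSemidef ∧ Z.toBlocks₁₂ = X ∧ c = (1/2) * Z.trace}
      (nuclearNorm X) := by
  have h := Matrix.isHermitian_conjTranspose_mul_self X
  set lam : Fin m → ℝ := h.eigenvalues with hlam
  set V : Matrix (Fin m) (Fin m) ℝ := (h.eigenvectorUnitary : Matrix (Fin m) (Fin m) ℝ) with hVdef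
  have hV1 : Vᴴ * V = 1 := (Matrix.mem_unitaryGroup_iff').mp h.eigenvectorUnitary.2
  have hV2 : V * Vᴴ = 1 := (Matrix.mem_unitaryGroup_iff).mp h.eigenvectorUnitary.2
  have hspec : Vᴴ * (Xᴴ * X) * V = Matrix.diagonal lam := by
    have := h.conjStarAlgAut_star_eigenvectorUnitary
    rw [Unitary.conjStarAlgAut_star_apply] at this
    exact this
  have hlam0 : ∀ i, 0 ≤ lam i :=
    fun i => (Matrix.posSemidef_conjTranspose_mul_self X).eigenvalues_nonneg i
  set σ : Fin m → ℝ := fun i => Real.sqrt (lam i) with hσ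
  have hσ0 : ∀ i, 0 ≤ σ i := fun i => Real.sqrt_nonneg _
  have hσsq : ∀ i, σ i * σ i = lam i := fun i => Real.mul_self_sqrt (hlam0 i)
  have hσzero : ∀ i, lam i = 0 → σ i = 0 := by
    intro i hi; simp [hσ, hi]
  have hσne : ∀ i, lam i ≠ 0 → σ i ≠ 0 := by
    intro i hi
    simp only [hσ]
    exact Real.sqrt_ne_zero'.mpr (lt_of_le_of_ne (hlam0 i) (Ne.symm hi))
  set g : Fin m → ℝ := fun i => if lam i = 0 then 0 else (σ i)⁻¹ with hg
  set e : Fin m → ℝ := fun i => if lam i = 0 then 0 else 1 with he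
  set U : Matrix (Fin n) (Fin m) ℝ := X * V * Matrix.diagonal g with hU
  have hUT : Uᴴ = Matrix.diagonal g * (Vᴴ * Xᴴ) := by
    rw [hU, Matrix.conjTranspose_mul, Matrix.conjTranspose_mul, Matrix.diagonal_conjTranspose]
    simp [Matrix.mul_assoc]
  have hUU : Uᴴ * U = Matrix.diagonal e := by
    rw [hUT, hU]
    have : Matrix.diagonal g * (Vᴴ * Xᴴ) * (X * V * Matrix.diagonal g)
        = Matrix.diagonal g * (Vᴴ * (Xᴴ * X) * V) * Matrix.diagonal g := by
      simp only [Matrix.mul_assoc]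
    rw [this, hspec, Matrix.diagonal_mul_diagonal, Matrix.diagonal_mul_diagonal]
    have hfe : (fun i => g i * lam i * g i) = e := by
      funext i
      by_cases hi : lam i = 0
      · simp [hg, he, hi]
      · simp only [hg, he, hi, if_false]
        field_simp [hσne i hi]
        rw [← hσsq i]; ring
    rw [hfe]
  -- columns of X*V with zero eigenvalue vanish
  have hNcol : ∀ i j, lam j = 0 → (X * V) i j = 0 := by
    intro i j hj
    have hN : (X * V)ᴴ * (X * V) = Matrix.diagonal lam := by
      rw [Matrix.conjTranspose_mul, ← hspec]
      simp only [Matrix.mul_assoc]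
    have hentry : ∑ k, (X * V) k j * (X * V) k j = lam j := by
      have := congrFun (congrFun hN j) j
      simpa [Matrix.mul_apply, Matrix.conjTranspose_apply, mul_comm] using this
    have hz : ∑ k, (X * V) k j * (X * V) k j = 0 := by rw [hentry, hj]
    have := (Finset.sum_eq_zero_iff_of_nonneg
      (fun k _ => mul_self_nonneg ((X * V) k j))).mp hz i (Finset.mem_univ i)
    exact mul_self_eq_zero.mp this
  have hXVe : X * V * Matrix.diagonal e = X * V := by
    ext i j
    rw [Matrix.mul_diagonal]
    by_cases hj : lam j = 0
    · rw [hNcol i j hj]; ring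
    · simp [he, hj]
  have hUe : U * Matrix.diagonal e = U := by
    rw [hU, Matrix.mul_assoc, Matrix.diagonal_mul_diagonal]
    have : (fun i => g i * e i) = g := by
      funext i; by_cases hi : lam i = 0 <;> simp [hg, he, hi]
    rw [this]
  have hUσV : U * Matrix.diagonal σ * Vᴴ = X := by
    have h1 : U * Matrix.diagonal σ = X * V * Matrix.diagonal e := by
      rw [hU, Matrix.mul_assoc, Matrix.mul_assoc, Matrix.diagonal_mul_diagonal]
      have : (fun i => g i * σ i) = e := by
        funext i
        by_cases hi : lam i = 0
        · simp [hg, he, hi, hσzero i hi]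
        · simp [hg, he, hi, inv_mul_cancel₀ (hσne i hi)]
      rw [this]
      simp only [Matrix.mul_assoc]
    rw [h1, hXVe, Matrix.mul_assoc, hV2, Matrix.mul_one]
  have hgl : (fun i => g i * lam i) = σ := by
    funext i
    by_cases hi : lam i = 0
    · simp [hg, hi, hσzero i hi]
    · simp only [hg, hi, if_false]
      rw [← hσsq i]
      field_simp [hσne i hi]
  have hUXV : Uᴴ * X * V = Matrix.diagonal σ := by
    rw [hUT]
    have : Matrix.diagonal g * (Vᴴ * Xᴴ) * X * V
        = Matrix.diagonal g * (Vᴴ * (Xᴴ * X) * V) := by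
      simp only [Matrix.mul_assoc]
    rw [this, hspec, Matrix.diagonal_mul_diagonal, hgl]
  have hσe : (fun i => σ i * e i) = σ := by
    funext i
    by_cases hi : lam i = 0
    · simp [he, hi, hσzero i hi]
    · simp [he, hi]
  have hnn : nuclearNorm X = ∑ i, σ i := rfl
  constructor
  · -- membership
    set s : Fin m → ℝ := fun i => Real.sqrt (σ i) with hs
    have hss : (fun i => s i * s i) = σ := by
      funext i; exact Real.mul_self_sqrt (hσ0 i)
    set M : Matrix (Fin m) (Fin n ⊕ Fin m) ℝ :=
      Matrix.fromCols (Matrix.diagonal s * Uᴴ) (Matrix.diagonal s * Vᴴ) with hM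
    refine ⟨Mᴴ * M, Matrix.posSemidef_conjTranspose_mul_self M, ?_, ?_⟩
    · -- block₁₂ = X
      have hMH : Mᴴ = Matrix.fromRows (U * Matrix.diagonal s) (V * Matrix.diagonal s) := by
        rw [hM, Matrix.conjTranspose_fromCols_eq_fromRows_conjTranspose]
        congr 1 <;>
          rw [Matrix.conjTranspose_mul, Matrix.conjTranspose_conjTranspose,
            Matrix.diagonal_conjTranspose] <;> simp
      have hprod : Mᴴ * M = Matrix.fromBlocks
          (U * Matrix.diagonal s * (Matrix.diagonal s * Uᴴ))
          (U * Matrix.diagonal s * (Matrix.diagonal s * Vᴴ))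
          (V * Matrix.diagonal s * (Matrix.diagonal s * Uᴴ))
          (V * Matrix.diagonal s * (Matrix.diagonal s * Vᴴ)) := by
        rw [hMH, hM, Matrix.fromRows_mul_fromCols]
      rw [hprod, Matrix.toBlocks_fromBlocks₁₂]
      calc U * Matrix.diagonal s * (Matrix.diagonal s * Vᴴ)
          = U * (Matrix.diagonal s * Matrix.diagonal s) * Vᴴ := by
            simp only [Matrix.mul_assoc]
        _ = X := by rw [Matrix.diagonal_mul_diagonal, hss, hUσV]
    · -- trace
      have hMH : Mᴴ = Matrix.fromRows (U * Matrix.diagonal s) (V * Matrix.diagonal s) := by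
        rw [hM, Matrix.conjTranspose_fromCols_eq_fromRows_conjTranspose]
        congr 1 <;>
          rw [Matrix.conjTranspose_mul, Matrix.conjTranspose_conjTranspose,
            Matrix.diagonal_conjTranspose] <;> simp
      have hprod : Mᴴ * M = Matrix.fromBlocks
          (U * Matrix.diagonal s * (Matrix.diagonal s * Uᴴ))
          (U * Matrix.diagonal s * (Matrix.diagonal s * Vᴴ))
          (V * Matrix.diagonal s * (Matrix.diagonal s * Uᴴ))
          (V * Matrix.diagonal s * (Matrix.diagonal s * Vᴴ)) := by
        rw [hMH, hM, Matrix.fromRows_mul_fromCols]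
      have htr : (Mᴴ * M).trace = 2 * ∑ i, σ i := by
        rw [tr_blocks, hprod, Matrix.toBlocks_fromBlocks₁₁, Matrix.toBlocks_fromBlocks₂₂]
        have t1 : (U * Matrix.diagonal s * (Matrix.diagonal s * Uᴴ)).trace = ∑ i, σ i := by
          rw [Matrix.mul_assoc, ← Matrix.mul_assoc (Matrix.diagonal s),
            Matrix.diagonal_mul_diagonal, hss, Matrix.trace_mul_comm,
            Matrix.mul_assoc, hUU, Matrix.diagonal_mul_diagonal, hσe,
            Matrix.trace_diagonal]
        have t2 : (V * Matrix.diagonal s * (Matrix.diagonal s * Vᴴ)).trace = ∑ i, σ i := by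
          rw [Matrix.mul_assoc, ← Matrix.mul_assoc (Matrix.diagonal s),
            Matrix.diagonal_mul_diagonal, hss, Matrix.trace_mul_comm,
            Matrix.mul_assoc, hV1, Matrix.mul_one, Matrix.trace_diagonal]
        rw [t1, t2]; ring
      rw [htr, hnn]; ring
  · -- lower bound
    rintro c ⟨Z, hZ, hZ12, rfl⟩
    set A := Z.toBlocks₁₁ with hA
    set B := Z.toBlocks₂₂ with hB
    have hZ21 : Z.toBlocks₂₁ = Xᴴ := by
      ext j i
      have := congrFun (congrFun hZ.isHermitian (Sum.inr j)) (Sum.inl i)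
      simp only [Matrix.conjTranspose_apply, star_trivial] at this
      rw [Matrix.toBlocks₂₁]
      simp only [Matrix.of_apply]
      rw [← this]
      rw [Matrix.conjTranspose_apply, ← hZ12]
      simp [Matrix.toBlocks₁₂]
    have hZblocks : Z = Matrix.fromBlocks A X Xᴴ B := by
      rw [← Matrix.fromBlocks_toBlocks Z, hZ12, hZ21]
    -- A and B are PSD
    have hApsd : A.PosSemidef := by
      have key := hZ.conjTranspose_mul_mul_same
        (Matrix.fromRows (1 : Matrix (Fin n) (Fin n) ℝ) (0 : Matrix (Fin m) (Fin n) ℝ))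
      have : (Matrix.fromRows (1 : Matrix (Fin n) (Fin n) ℝ) (0 : Matrix (Fin m) (Fin n) ℝ))ᴴ
          * Z * Matrix.fromRows (1 : Matrix (Fin n) (Fin n) ℝ) (0 : Matrix (Fin m) (Fin n) ℝ)
          = A := by
        rw [hZblocks, Matrix.mul_assoc, Matrix.fromBlocks_mul_fromRows,
          Matrix.conjTranspose_fromRows_eq_fromCols_conjTranspose,
          Matrix.fromCols_mul_fromRows]
        simp
      rwa [this] at key
    -- P = 1 - U Uᴴ is PSD
    have hUUe : U * Matrix.diagonal e * Uᴴ = U * Uᴴ := by rw [hUe]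
    set P : Matrix (Fin n) (Fin n) ℝ := 1 - U * Uᴴ with hP
    have hPH : Pᴴ = P := by
      rw [hP]
      simp [Matrix.conjTranspose_mul]
    have hPP : P * P = P := by
      have h4 : U * Uᴴ * (U * Uᴴ) = U * Uᴴ := by
        calc U * Uᴴ * (U * Uᴴ) = U * (Uᴴ * U) * Uᴴ := by simp only [Matrix.mul_assoc]
          _ = U * Matrix.diagonal e * Uᴴ := by rw [hUU]
          _ = U * Uᴴ := hUUe
      rw [hP, Matrix.sub_mul, Matrix.mul_sub, Matrix.mul_sub, Matrix.one_mul, Matrix.mul_one, h4]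
      simp
    have hPpsd : P.PosSemidef := by
      have := Matrix.posSemidef_conjTranspose_mul_self P
      rwa [hPH, hPP] at this
    -- trace (Uᴴ A U) ≤ trace A
    have htrA : (Uᴴ * A * U).trace ≤ A.trace := by
      have h1 : (Uᴴ * A * U).trace = (A * (U * Uᴴ)).trace := by
        rw [Matrix.mul_assoc, Matrix.trace_mul_comm, Matrix.mul_assoc]
      have h2 : 0 ≤ (A * P).trace := tr_mul_nonneg hApsd hPpsd
      have h3 : (A * P).trace = A.trace - (A * (U * Uᴴ)).trace := by
        rw [hP, Matrix.mul_sub, Matrix.mul_one, Matrix.trace_sub]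
      rw [h1]; linarith [h2, h3.symm.le, h3.le]
    -- trace (Vᴴ B V) = trace B
    have htrB : (Vᴴ * B * V).trace = B.trace := by
      rw [Matrix.trace_mul_cycle, hV2, Matrix.one_mul]
    -- the PSD conjugation with T = fromRows U (-V)
    set T : Matrix (Fin n ⊕ Fin m) (Fin m) ℝ := Matrix.fromRows U (-V) with hT
    have hTpsd := hZ.conjTranspose_mul_mul_same T
    have hTcompute : Tᴴ * Z * T
        = Uᴴ * A * U - Uᴴ * X * V - Vᴴ * Xᴴ * U + Vᴴ * B * V := by
      rw [hT, hZblocks, Matrix.mul_assoc, Matrix.fromBlocks_mul_fromRows,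
        Matrix.conjTranspose_fromRows_eq_fromCols_conjTranspose,
        Matrix.fromCols_mul_fromRows]
      simp only [Matrix.mul_neg, Matrix.conjTranspose_neg, Matrix.neg_mul,
        Matrix.mul_add, Matrix.add_mul]
      simp only [Matrix.mul_assoc]
      abel
    have htrT : 0 ≤ (Tᴴ * Z * T).trace := tr_nonneg hTpsd
    have hXU : (Vᴴ * Xᴴ * U).trace = ∑ i, σ i := by
      have : Vᴴ * Xᴴ * U = (Uᴴ * X * V)ᴴ := by
        simp [Matrix.conjTranspose_mul, Matrix.mul_assoc]
      rw [this, hUXV]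
      have : (Matrix.diagonal σ)ᴴ = Matrix.diagonal σ := by
        rw [Matrix.diagonal_conjTranspose]; simp
      rw [this, Matrix.trace_diagonal]
    have hXU' : (Uᴴ * X * V).trace = ∑ i, σ i := by
      rw [hUXV, Matrix.trace_diagonal]
    have hkey : 2 * ∑ i, σ i ≤ A.trace + B.trace := by
      have := htrT
      rw [hTcompute] at this
      rw [Matrix.trace_add, Matrix.trace_sub, Matrix.trace_sub, hXU, hXU'] at this
      linarith [htrA, htrB.le, htrB.ge]
    have htrZ : Z.trace = A.trace + B.trace := tr_blocks Z
    rw [hnn, htrZ]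
    linarith
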